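/- Let n, k, r ≥ 1, let W : ℕ^n → ℕ be a function, let A ⊆ ℕ^n be partition regular, and let f : ℕ → [k] be a colouring admitting no monochromatic exponential A-pattern with weight W (i.e. there are no a, b > 1 and (x_1,…,x_n) ∈ A such that a, b^{x_1},…,b^{x_n}, a^{b^1},…,a^{b^{W(x_1,…,x_n)}} all have the same colour under f). Then there exist pairwise distinct colours c_1,…,c_r ∈ [k] and colourings f̃_1,…,f̃_r : ℕ → [k] such that: (1) for each i ∈ [r] there is a sequence of positive integers (d_i(m))_{m∈ℕ} with f_{d_i(m)} → f̃_i as m → ∞, where f_d : ℕ → [k] is the restricted colouring f_d(x) = f(2^{d·2^x}); and (2) the sequence of colours c_1,…,c_r is large with respect to f̃_1,…,f̃_r. -/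
import Mathlib


/-- A collection `A` of `n`-tuples of positive integers is partition regular if every
finite colouring of `ℕ` admits a monochromatic tuple from `A`. -/
def PartitionRegular (n : ℕ) (A : Set (Fin n → ℕ)) : Prop :=
  ∀ (X : Type) [Finite X] (f : ℕ → X),
    ∃ x ∈ A, ∃ c : X, ∀ i, f (x i) = c

/-- The colouring `f` restricted to the `d`-sequence `{2^{d·2^x}}_x`. -/
def RestrictedColouring {k : ℕ} (f : ℕ → Fin k) (d : ℕ) : ℕ → Fin k :=
  fun x => f (2 ^ (d * 2 ^ x))

/-- A sequence of `k`-colourings `g_m` converges to `g` if for every `m₀` there is `M`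
such that `g_m` agrees with `g` on `[m₀]` for all `m ≥ M`. -/
def ConvergesTo {k : ℕ} (g : ℕ → ℕ → Fin k) (g' : ℕ → Fin k) : Prop :=
  ∀ m₀ : ℕ, ∃ M : ℕ, ∀ m ≥ M, ∀ x ≤ m₀, g m x = g' x

/-- Colours `c_1,…,c_r` are large with respect to colourings `F_1,…,F_r` if for every `M`
there is an arithmetic progression of length `M` (with positive common difference) on
which each `F_i` is constantly `c_i`. -/
def IsLarge {k : ℕ} {r : ℕ} (c : Fin r → Fin k) (F : Fin r → ℕ → Fin k) : Prop :=
  ∀ M : ℕ, ∃ a d : ℕ, 1 ≤ d ∧ ∀ i : Fin r, ∀ t < M, F i (a + d * t) = c i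

open Filter Combinatorics

/-! ### Ultrafilter limits of colourings -/

section Ulim
variable {α : Type*}

lemma ultra_pigeon {β : Type*} [Finite β] [Nonempty β] (U : Ultrafilter α) (g : α → β) :
    ∃ b : β, {n | g n = b} ∈ U := by
  by_contra h
  push_neg at h
  have h2 : ∀ b : β, {n | g n = b}ᶜ ∈ U := fun b => (Ultrafilter.compl_mem_iff_notMem).2 (h b)
  have hmem : (⋂ b : β, {n | g n = b}ᶜ) ∈ (U : Filter α) :=
    (Filter.iInter_mem (s := fun b : β => {n | g n = b}ᶜ)).2 h2
  have hempty : (⋂ b : β, {n | g n = b}ᶜ) = (∅ : Set α) := by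
    ext n; simp
  rw [hempty] at hmem
  exact Filter.empty_notMem (U : Filter α) hmem

/-- The limit of a sequence in a finite type along an ultrafilter. -/
noncomputable def ulim {β : Type*} [Finite β] [Nonempty β] (U : Ultrafilter α) (g : α → β) : β :=
  (ultra_pigeon U g).choose

lemma ulim_spec {β : Type*} [Finite β] [Nonempty β] (U : Ultrafilter α) (g : α → β) :
    {n | g n = ulim U g} ∈ U :=
  (ultra_pigeon U g).choose_spec

end Ulim

section UlimAgree
variable {k : ℕ} [Nonempty (Fin k)]

lemma ulim_agree_le (U : Ultrafilter ℕ) (g : ℕ → ℕ → Fin k) (m₀ : ℕ) :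
    {B | ∀ x ≤ m₀, g B x = ulim U (fun B' => g B' x)} ∈ U := by
  induction m₀ with
  | zero =>
    refine Filter.mem_of_superset (ulim_spec U (fun B' => g B' 0)) ?_
    intro B hB x hx
    have : x = 0 := Nat.le_zero.mp hx
    subst this; exact hB
  | succ m ih =>
    have h2 := ulim_spec U (fun B' => g B' (m + 1))
    refine Filter.mem_of_superset (Filter.inter_mem ih h2) ?_
    rintro B ⟨hB1, hB2⟩ x hx
    rcases Nat.lt_succ_iff_lt_or_eq.mp (Nat.lt_succ_of_le hx) with h | h
    · exact hB1 x (Nat.lt_succ_iff.mp h)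
    · subst h; exact hB2

lemma ulim_agree_fin {γ : Type*} [Finite γ] (U : Ultrafilter ℕ)
    (g : ℕ → γ → ℕ → Fin k) (m₀ : ℕ) :
    {B | ∀ j : γ, ∀ x ≤ m₀, g B j x = ulim U (fun B' => g B' j x)} ∈ U := by
  have h1 : ∀ j : γ, {B | ∀ x ≤ m₀, g B j x = ulim U (fun B' => g B' j x)} ∈ U :=
    fun j => ulim_agree_le U (fun B x => g B j x) m₀
  have hmem : (⋂ j : γ, {B | ∀ x ≤ m₀, g B j x = ulim U (fun B' => g B' j x)}) ∈ (U : Filter ℕ) :=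
    (Filter.iInter_mem (s := fun j : γ => {B | ∀ x ≤ m₀, g B j x = ulim U (fun B' => g B' j x)})).2 h1
  refine Filter.mem_of_superset hmem ?_
  intro B hB j
  exact Set.mem_iInter.mp hB j

lemma ge_mem_hyperfilter (a : ℕ) : {B : ℕ | a ≤ B} ∈ Filter.hyperfilter ℕ := by
  have h : ({B : ℕ | B < a} : Set ℕ).Finite := Set.finite_lt_nat a
  have := Filter.compl_mem_hyperfilter_of_finite h
  convert this using 1
  ext B; simp [not_lt]

end UlimAgree

/-! ### Finitary van der Waerden from Hales–Jewett -/

lemma vdw_fin (k M : ℕ) :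
    ∃ N : ℕ, ∀ C : ℕ → Fin k, ∃ v δ : ℕ, ∃ c0 : Fin k,
      1 ≤ δ ∧ (∀ t < M, v + δ * t < N) ∧ ∀ t < M, C (v + δ * t) = c0 := by
  obtain ⟨ι, _inst, hι⟩ := Line.exists_mono_in_high_dimension (Fin M) (Fin k)
  refine ⟨Fintype.card ι * M + 1, fun C => ?_⟩
  obtain ⟨l, c0, hl⟩ := hι (fun w => C (∑ i, (w i : ℕ)))
  classical
  set s : Finset ι := Finset.univ.filter (fun i => l.idxFun i = none) with hs
  set δ : ℕ := s.card with hδ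
  set v : ℕ := ∑ i ∈ sᶜ, ((l.idxFun i).map (fun (a : Fin M) => (a : ℕ))).getD 0 with hv
  have hδ1 : 1 ≤ δ := by
    rw [hδ, Nat.one_le_iff_ne_zero, Ne, Finset.card_eq_zero]
    intro hempty
    obtain ⟨i, hi⟩ := l.proper
    have : i ∈ s := by simp [hs, hi]
    simp [hempty] at this
  have key : ∀ t : Fin M, (∑ i, ((l t i : Fin M) : ℕ)) = v + δ * (t : ℕ) := by
    intro t
    rw [← Finset.sum_add_sum_compl s]
    have h1 : ∑ i ∈ s, ((l t i : Fin M) : ℕ) = δ * (t : ℕ) := by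
      rw [Finset.sum_congr rfl (fun i hi => ?_), Finset.sum_const, smul_eq_mul]
      have : l.idxFun i = none := by
        rw [hs, Finset.mem_filter] at hi; exact hi.2
      show ((l.idxFun i).getD t : ℕ) = (t : ℕ)
      rw [this]; rfl
    have h2 : ∑ i ∈ sᶜ, ((l t i : Fin M) : ℕ) = v := by
      rw [hv]
      refine Finset.sum_congr rfl (fun i hi => ?_)
      rw [Finset.mem_compl, hs, Finset.mem_filter] at hi
      have : ¬ l.idxFun i = none := fun h => hi (by simp [h])
      obtain ⟨y, hy⟩ := Option.ne_none_iff_exists.mp this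
      show ((l.idxFun i).getD t : ℕ) = _
      rw [← hy]; rfl
    rw [h1, h2, add_comm]
  have bound : ∀ t : Fin M, v + δ * (t : ℕ) < Fintype.card ι * M + 1 := by
    intro t
    rw [← key t, Nat.lt_succ_iff]
    calc (∑ i, ((l t i : Fin M) : ℕ)) ≤ ∑ _i : ι, M := by
          refine Finset.sum_le_sum (fun i _ => ?_)
          exact le_of_lt (l t i).isLt
      _ = Fintype.card ι * M := by simp [Finset.sum_const, Finset.card_univ, mul_comm]
  refine ⟨v, δ, c0, hδ1, ?_, ?_⟩
  · intro t ht; exact bound ⟨t, ht⟩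
  · intro t ht
    have := hl ⟨t, ht⟩
    rw [← this]
    congr 1
    exact (key ⟨t, ht⟩).symm

/-! ### The extension lemma: joint largeness with one more colouring -/

lemma extend_large {k r : ℕ} (hk : 1 ≤ k) (G : Fin r → ℕ → Fin k) (c : Fin r → Fin k)
    (hLarge : IsLarge c G) (h : ℕ → Fin k) :
    ∃ cn : Fin k, IsLarge (Fin.snoc c cn) (Fin.snoc G h) := by
  haveI : Nonempty (Fin k) := ⟨⟨0, hk⟩⟩
  have key : ∀ M : ℕ, ∃ φ : Fin k, ∃ a d : ℕ, 1 ≤ d ∧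
      (∀ i : Fin r, ∀ t < M, G i (a + d * t) = c i) ∧ (∀ t < M, h (a + d * t) = φ) := by
    intro M
    obtain ⟨N, hN⟩ := vdw_fin k M
    obtain ⟨a0, d0, hd0, hG⟩ := hLarge N
    obtain ⟨v, δ, φ, hδ, hbound, hmono⟩ := hN (fun t => h (a0 + d0 * t))
    refine ⟨φ, a0 + d0 * v, d0 * δ, Nat.mul_pos hd0 hδ, ?_, ?_⟩
    · intro i t ht
      have heq : a0 + d0 * v + d0 * δ * t = a0 + d0 * (v + δ * t) := by ring
      rw [heq]
      exact hG i (v + δ * t) (hbound t ht)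
    · intro t ht
      have heq : a0 + d0 * v + d0 * δ * t = a0 + d0 * (v + δ * t) := by ring
      rw [heq]
      exact hmono t ht
  choose φ a d hd hG hh using key
  have hφ : ∃ cn : Fin k, ∀ M, ∃ M', M ≤ M' ∧ φ M' = cn := by
    by_contra hcon
    push_neg at hcon
    choose Mb hMb using hcon
    classical
    set Mx := (Finset.univ : Finset (Fin k)).sup Mb with hMx
    exact hMb (φ Mx) Mx (Finset.le_sup (Finset.mem_univ _)) rfl
  obtain ⟨cn, hcn⟩ := hφ
  refine ⟨cn, fun M => ?_⟩
  obtain ⟨M', hMM', hφM'⟩ := hcn M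
  refine ⟨a M', d M', hd M', ?_⟩
  intro i t ht
  have ht' : t < M' := lt_of_lt_of_le ht hMM'
  cases i using Fin.lastCases with
  | last =>
    rw [Fin.snoc_last, Fin.snoc_last]
    rw [hh M' t ht', hφM']
  | cast j =>
    rw [Fin.snoc_castSucc, Fin.snoc_castSucc]
    exact hG M' j t ht'

lemma snoc_injective {r k : ℕ} {c : Fin r → Fin k} {cn : Fin k}
    (hInj : Function.Injective c) (hcn : ∀ j, c j ≠ cn) :
    Function.Injective (Fin.snoc c cn : Fin (r + 1) → Fin k) := by
  intro i j hij
  cases i using Fin.lastCases with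
  | last =>
    cases j using Fin.lastCases with
    | last => rfl
    | cast j' =>
      rw [Fin.snoc_last, Fin.snoc_castSucc] at hij
      exact absurd hij.symm (hcn j')
  | cast i' =>
    cases j using Fin.lastCases with
    | last =>
      rw [Fin.snoc_last, Fin.snoc_castSucc] at hij
      exact absurd hij (hcn i')
    | cast j' =>
      rw [Fin.snoc_castSucc, Fin.snoc_castSucc] at hij
      rw [hInj hij]

/-- A colouring is a limit of restricted colourings of `f`. -/
def IsLim {k : ℕ} (f : ℕ → Fin k) (F : ℕ → Fin k) : Prop :=
  ∃ d : ℕ → ℕ, (∀ m, 1 ≤ d m) ∧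
    ConvergesTo (fun m => RestrictedColouring f (d m)) F

/-! ### The inductive step -/

lemma step_lemma {n k : ℕ} (hn : 1 ≤ n) (hk : 1 ≤ k)
    (W : (Fin n → ℕ) → ℕ) (A : Set (Fin n → ℕ))
    (hA : ∀ x ∈ A, ∀ i, 0 < x i)
    (hPR : PartitionRegular n A)
    (f : ℕ → Fin k)
    (hf : ¬ ∃ a b : ℕ, 1 < a ∧ 1 < b ∧ ∃ x ∈ A, ∃ c : Fin k,
      f a = c ∧ (∀ i, f (b ^ x i) = c) ∧
      ∀ l, 1 ≤ l → l ≤ W x → f (a ^ b ^ l) = c)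
    (r : ℕ) (G : Fin r → ℕ → Fin k) (c : Fin r → Fin k)
    (hLim : ∀ i, IsLim f (G i)) (hInj : Function.Injective c) (hLarge : IsLarge c G) :
    ∃ (G' : Fin (r + 1) → ℕ → Fin k) (c' : Fin (r + 1) → Fin k),
      (∀ i, IsLim f (G' i)) ∧ Function.Injective c' ∧ IsLarge c' G' := by
  haveI : Nonempty (Fin k) := ⟨⟨0, hk⟩⟩
  set U : Ultrafilter ℕ := Filter.hyperfilter ℕ with hU
  set i0 : Fin n := ⟨0, hn⟩ with hi0
  -- largeness data, indexed so that `ρ`-th has length `ρ + 1`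
  choose Va Dd hDd hAP using hLarge
  set V : ℕ → ℕ := fun ρ => Va (ρ + 1) with hV
  set Δ : ℕ → ℕ := fun ρ => Dd (ρ + 1) with hΔ
  have hΔ1 : ∀ ρ, 1 ≤ Δ ρ := fun ρ => hDd (ρ + 1)
  have hAP' : ∀ ρ, ∀ i : Fin r, ∀ t ≤ ρ, G i (V ρ + Δ ρ * t) = c i := by
    intro ρ i t ht
    exact hAP (ρ + 1) i t (Nat.lt_succ_of_le ht)
  -- ultrafilter-limit "idealized" colouring data
  set κ : ℕ → ℕ → Fin k := fun y w => ulim U (fun ρ => f (2 ^ (Δ ρ * y * 2 ^ w))) with hκ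
  -- partition-regular choices for each truncation level B
  have hPRall : ∀ B : ℕ, ∃ x ∈ A, ∃ cc : Fin B → Fin k,
      ∀ i, (fun w : Fin B => κ (x i) (w : ℕ)) = cc :=
    fun B => hPR (Fin B → Fin k) (fun y => fun w : Fin B => κ y (w : ℕ))
  choose x hxA cc hcc using hPRall
  have hsame : ∀ B : ℕ, ∀ i : Fin n, ∀ w < B, κ (x B i) w = κ (x B i0) w := by
    intro B i w hw
    have h1 := congrFun (hcc B i) ⟨w, hw⟩
    have h2 := congrFun (hcc B i0) ⟨w, hw⟩
    simp only at h1 h2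
    rw [h1, h2]
  -- choose good ultrafilter indices ρB B
  have hT12 : ∀ B : ℕ, ∃ ρ, (∀ j : Fin n, ∀ w ≤ B,
      f (2 ^ (Δ ρ * (x B j) * 2 ^ w)) = κ (x B j) w) ∧ 2 ^ B * (W (x B) + 1) ≤ ρ := by
    intro B
    have h1 : {ρ | ∀ j : Fin n, ∀ w ≤ B,
        f (2 ^ (Δ ρ * (x B j) * 2 ^ w)) = κ (x B j) w} ∈ U :=
      ulim_agree_fin U (fun ρ j w => f (2 ^ (Δ ρ * (x B j) * 2 ^ w))) B
    have h2 : {ρ : ℕ | 2 ^ B * (W (x B) + 1) ≤ ρ} ∈ U := ge_mem_hyperfilter _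
    obtain ⟨ρ, hρ⟩ := Ultrafilter.nonempty_of_mem (Filter.inter_mem h1 h2 : _ ∈ U)
    exact ⟨ρ, hρ.1, hρ.2⟩
  choose ρB hρB1 hρB2 using hT12
  -- the new colouring: an ultrafilter limit of restricted colourings
  set e : ℕ → ℕ := fun B => Δ (ρB B) * (x B i0) with he
  have he1 : ∀ B, 1 ≤ e B :=
    fun B => Nat.mul_pos (hΔ1 (ρB B)) (hA (x B) (hxA B) i0)
  set gnew : ℕ → Fin k := fun z => ulim U (fun B => RestrictedColouring f (e B) z) with hgnew
  have hLimNew : IsLim f gnew := by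
    have hT : ∀ m : ℕ, {B | ∀ z ≤ m, RestrictedColouring f (e B) z = gnew z} ∈ U :=
      fun m => ulim_agree_le U (fun B z => RestrictedColouring f (e B) z) m
    choose Bm hBm using fun m => Ultrafilter.nonempty_of_mem (hT m)
    refine ⟨fun m => e (Bm m), fun m => he1 _, fun m₀ => ⟨m₀, fun m hm z hz => ?_⟩⟩
    exact hBm m z (le_trans hz hm)
  obtain ⟨cn, hLargeExt⟩ := extend_large hk G c (fun M => ⟨Va M, Dd M, hDd M, hAP M⟩) gnew
  -- the new colour is genuinely new, by the pattern-freeness of `f`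
  have hnew : ∀ j : Fin r, c j ≠ cn := by
    intro j hj
    obtain ⟨v₀, D₀, hD₀, hpt⟩ := hLargeExt 1
    have hw : gnew v₀ = cn := by
      have h := hpt (Fin.last r) 0 Nat.zero_lt_one
      simpa using h
    set w := v₀ with hwdef
    have h3 : {B | RestrictedColouring f (e B) w = gnew w} ∈ U :=
      ulim_spec U (fun B => RestrictedColouring f (e B) w)
    have h4 : {B : ℕ | w + 1 ≤ B} ∈ U := ge_mem_hyperfilter _
    obtain ⟨B, hB3, hB4⟩ := Ultrafilter.nonempty_of_mem (Filter.inter_mem h3 h4 : _ ∈ U)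
    have hwB : w < B := hB4
    have e1 : RestrictedColouring f (e B) w = f (2 ^ (Δ (ρB B) * (x B i0) * 2 ^ w)) := rfl
    have e2 : f (2 ^ (Δ (ρB B) * (x B i0) * 2 ^ w)) = κ (x B i0) w :=
      hρB1 B i0 w (le_of_lt hwB)
    have hc0 : κ (x B i0) w = c j := by
      rw [← e2, ← e1, hB3, hw]; exact hj.symm
    have hκw : ∀ i : Fin n, f (2 ^ (Δ (ρB B) * (x B i) * 2 ^ w)) = c j := by
      intro i
      rw [hρB1 B i w (le_of_lt hwB), hsame B i w hwB, hc0]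
    set P := ρB B with hP
    set xs := x B with hxs
    have hρgeq : 2 ^ B * (W xs + 1) ≤ P := hρB2 B
    have hGj : ∀ l ≤ W xs, G j (V P + Δ P * (2 ^ w * l)) = c j := by
      intro l hl
      apply hAP' P j
      calc 2 ^ w * l ≤ 2 ^ B * (W xs + 1) := by
            have h2w : (2 : ℕ) ^ w ≤ 2 ^ B := Nat.pow_le_pow_right (by norm_num) (le_of_lt hwB)
            exact Nat.mul_le_mul h2w (le_trans hl (Nat.le_succ _))
        _ ≤ P := hρgeq
    obtain ⟨dj, hdj1, hdjc⟩ := hLim j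
    obtain ⟨Mj, hMj⟩ := hdjc (V P + Δ P * (2 ^ w * W xs))
    have htrans : ∀ l ≤ W xs, RestrictedColouring f (dj Mj) (V P + Δ P * (2 ^ w * l)) = c j := by
      intro l hl
      have hzle : V P + Δ P * (2 ^ w * l) ≤ V P + Δ P * (2 ^ w * W xs) :=
        Nat.add_le_add_left (Nat.mul_le_mul_left _ (Nat.mul_le_mul_left _ hl)) _
      have h5 : RestrictedColouring f (dj Mj) (V P + Δ P * (2 ^ w * l))
          = G j (V P + Δ P * (2 ^ w * l)) := hMj Mj le_rfl _ hzle
      rw [h5]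
      exact hGj l hl
    apply hf
    refine ⟨2 ^ (dj Mj * 2 ^ V P), 2 ^ (Δ P * 2 ^ w), ?_, ?_, xs, hxA B, c j, ?_, ?_, ?_⟩
    · rw [Nat.one_lt_two_pow_iff]
      have h1 : 1 ≤ dj Mj := hdj1 Mj
      positivity
    · rw [Nat.one_lt_two_pow_iff]
      have h1 : 1 ≤ Δ P := hΔ1 P
      positivity
    · have h := htrans 0 (Nat.zero_le _)
      simpa [RestrictedColouring] using h
    · intro i
      have h := hκw i
      have hexp : (2 : ℕ) ^ (Δ P * 2 ^ w * xs i) = (2 ^ (Δ P * 2 ^ w)) ^ xs i := pow_mul 2 _ _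
      rw [← hexp]
      rw [show Δ P * 2 ^ w * xs i = Δ P * xs i * 2 ^ w by ring]
      exact h
    · intro l hl1 hl2
      have h := htrans l hl2
      have hexp : (2 ^ (dj Mj * 2 ^ V P)) ^ (2 ^ (Δ P * 2 ^ w)) ^ l
          = 2 ^ (dj Mj * 2 ^ (V P + Δ P * (2 ^ w * l))) := by
        rw [← pow_mul, ← pow_mul]
        congr 1
        rw [mul_assoc (Δ P), pow_add, ← mul_assoc]
        ring
      rw [hexp]
      exact h
  refine ⟨Fin.snoc G gnew, Fin.snoc c cn, ?_, snoc_injective hInj hnew, hLargeExt⟩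
  intro i
  cases i using Fin.lastCases with
  | last => rw [Fin.snoc_last]; exact hLimNew
  | cast j => rw [Fin.snoc_castSucc]; exact hLim j

/-- **Main lemma.** If `f : ℕ → [k]` admits no monochromatic exponential `A`-pattern
with weight `W`, then for every `r` there are pairwise distinct colours `c_1,…,c_r`
and `idealized' colourings `f̃_1,…,f̃_r`, each a limit of restrictions of `f` to
`d`-sequences, such that `c_1,…,c_r` is large with respect to `f̃_1,…,f̃_r`. -/
theorem main_lemma (n k r : ℕ) (hn : 1 ≤ n) (hk : 1 ≤ k) (hr : 1 ≤ r)
    (W : (Fin n → ℕ) → ℕ) (A : Set (Fin n → ℕ))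
    (hA : ∀ x ∈ A, ∀ i, 0 < x i)
    (hPR : PartitionRegular n A)
    (f : ℕ → Fin k)
    (hf : ¬ ∃ a b : ℕ, 1 < a ∧ 1 < b ∧ ∃ x ∈ A, ∃ c : Fin k,
      f a = c ∧ (∀ i, f (b ^ x i) = c) ∧
      ∀ l, 1 ≤ l → l ≤ W x → f (a ^ b ^ l) = c) :
    ∃ (c : Fin r → Fin k) (F : Fin r → ℕ → Fin k),
      Function.Injective c ∧
      (∀ i : Fin r, ∃ d : ℕ → ℕ, (∀ m, 1 ≤ d m) ∧
        ConvergesTo (fun m => RestrictedColouring f (d m)) (F i)) ∧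
      IsLarge c F := by

  have main : ∀ s : ℕ, ∃ (G : Fin s → ℕ → Fin k) (c : Fin s → Fin k),
      (∀ i, IsLim f (G i)) ∧ Function.Injective c ∧ IsLarge c G := by
    intro s
    induction s with
    | zero =>
      refine ⟨Fin.elim0, Fin.elim0, fun i => i.elim0, ?_, fun M => ⟨0, 1, le_rfl, fun i => i.elim0⟩⟩
      intro i j _
      exact i.elim0
    | succ s ih =>
      obtain ⟨G, c, h1, h2, h3⟩ := ih
      exact step_lemma hn hk W A hA hPR f hf s G c h1 h2 h3
  obtain ⟨G, c, h1, h2, h3⟩ := main r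
  exact ⟨c, G, h2, fun i => h1 i, h3⟩
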